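/- For any coordinate system on an n-dimensional vector space V (i.e., a basis B) and any m-dimensional subspace s ≤ V with m ≤ n, there exists an (n-m)-dimensional coordinate subspace t (spanned by n-m of the basis vectors) such that s ∩ t = {0}. -/

import Mathlib

theorem coordinate_complement_exists (F V : Type*) [Field F] [AddCommGroup V] [Module F V]
    [FiniteDimensional F V] (n m : ℕ) (hn : Module.finrank F V = n) (hm : m ≤ n)
    (B : Module.Basis (Fin n) F V)
    (s : Submodule F V) (hs : Module.finrank F s = m) :
    ∃ I : Finset (Fin n), I.card = n - m ∧
      s ⊓ Submodule.span F (B '' (I : Set (Fin n))) = ⊥ := by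
  classical
  obtain ⟨S, hSs, hSspan, hSli⟩ := exists_linearIndependent F (s : Set V)
  rw [Submodule.span_coe_eq_restrictScalars, Submodule.restrictScalars_self] at hSspan
  have hSfin : S.Finite := hSli.setFinite
  have hSfintype := hSfin.fintype
  have hScard : S.toFinset.card = m := by
    have := finrank_span_set_eq_card hSli
    rw [hSspan] at this
    omega
  -- extend S to a basis within S ∪ range B
  have hst : S ⊆ S ∪ Set.range B := Set.subset_union_left
  set E := (show LinearIndepOn F id S from hSli).extend hst with hE
  have hEli : LinearIndependent F ((↑) : E → V) := (show LinearIndepOn F id S from hSli).linearIndepOn_extend hst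
  have hSE : S ⊆ E := (show LinearIndepOn F id S from hSli).subset_extend hst
  have hEsub : E ⊆ S ∪ Set.range B := (show LinearIndepOn F id S from hSli).extend_subset hst
  have hEspan : Submodule.span F E = ⊤ := by
    rw [(show LinearIndepOn F id S from hSli).span_extend_eq_span hst]
    refine top_unique ?_
    rw [← B.span_eq]
    exact Submodule.span_mono Set.subset_union_right
  have hEfin : E.Finite := hEli.setFinite
  have hEfintype := hEfin.fintype
  have hEcard : E.toFinset.card = n := by
    have := finrank_span_set_eq_card hEli
    rw [hEspan, finrank_top, hn] at this
    omega
  -- the diff is contained in range B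
  have hDB : E \ S ⊆ Set.range B := by
    intro x hx
    rcases hEsub hx.1 with h | h
    · exact absurd h hx.2
    · exact h
  set I : Finset (Fin n) := Finset.univ.filter (fun i => B i ∈ E \ S) with hI
  have hBI : B '' (I : Set (Fin n)) = E \ S := by
    ext x
    constructor
    · rintro ⟨i, hi, rfl⟩
      simpa [hI] using hi
    · intro hx
      rcases hDB hx with ⟨i, rfl⟩
      exact ⟨i, by simpa [hI] using hx, rfl⟩
  have hIcard : I.card = n - m := by
    have hinj : Set.InjOn B (I : Set (Fin n)) := B.injective.injOn
    have h1 : (B '' (I : Set (Fin n))).ncard = I.card := by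
      rw [Set.ncard_image_of_injOn hinj]
      simp [Set.ncard_coe_finset]
    have h2 : (E \ S).ncard = n - m := by
      rw [Set.ncard_diff hSE hSfin]
      rw [Set.ncard_eq_toFinset_card' E, Set.ncard_eq_toFinset_card' S, hEcard, hScard]
    rw [hBI, h2] at h1
    omega
  refine ⟨I, hIcard, ?_⟩
  rw [hBI]
  rw [← hSspan]
  rw [eq_bot_iff]
  have hdisj : Disjoint (Submodule.span F (((↑) : E → V) '' {x : E | (x : V) ∈ S}))
      (Submodule.span F (((↑) : E → V) '' {x : E | (x : V) ∈ E \ S})) := by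
    exact hEli.disjoint_span_image (Set.disjoint_left.mpr fun x hx hx2 => hx2.2 hx)
  have h1 : ((↑) : E → V) '' {x : E | (x : V) ∈ S} = S := by
    ext x; constructor
    · rintro ⟨y, hy, rfl⟩; exact hy
    · intro hx; exact ⟨⟨x, hSE hx⟩, hx, rfl⟩
  have h2 : ((↑) : E → V) '' {x : E | (x : V) ∈ E \ S} = E \ S := by
    ext x; constructor
    · rintro ⟨y, hy, rfl⟩; exact hy
    · intro hx; exact ⟨⟨x, hx.1⟩, hx, rfl⟩
  rw [h1, h2] at hdisj
  exact disjoint_iff.mp hdisj |>.le
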